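/- Let 0 < θ < 1 and 2 ≤ x ≤ θ + 1/θ. Then the function g(u) := −(1/2)·θxu − (θ²/4)·(1−u)² − (1/2)·log(1−u) attains its minimum over [0,1) at u = 0: for every u ∈ [0,1), g(u) ≥ g(0). -/

import Mathlib

noncomputable section

/-- The `u`-dependent part of the large-deviation rate function in the regime
`θ(1-u) ≤ 1`: `g(u) = -(1/2)θxu - (θ²/4)(1-u)² - (1/2)log(1-u)`. -/
def gfun (θ x u : ℝ) : ℝ :=
  -(1 / 2) * (θ * x * u) - θ ^ 2 / 4 * (1 - u) ^ 2 - (1 / 2) * Real.log (1 - u)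

/-- `u_θ = 1 - (θx - √(θ²x² - 4θ²))/(2θ²)`, solving `θ²(1-u)² - θx(1-u) + 1 = 0`. -/
def uTheta (θ x : ℝ) : ℝ :=
  1 - (θ * x - Real.sqrt (θ ^ 2 * x ^ 2 - 4 * θ ^ 2)) / (2 * θ ^ 2)

lemma gfun_hasDerivAt (θ x v : ℝ) (hv : v < 1) :
    HasDerivAt (gfun θ x)
      (-(θ * x) / 2 + θ ^ 2 * (1 - v) / 2 + 1 / (2 * (1 - v))) v := by
  have h1 : (1 : ℝ) - v ≠ 0 := by intro h; linarith [sub_eq_zero.mp h]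
  have hlin : HasDerivAt (fun u : ℝ => 1 - u) (-1) v := by
    simpa using (hasDerivAt_id v).const_sub 1
  have hlog : HasDerivAt (fun u : ℝ => Real.log (1 - u)) ((1 - v)⁻¹ * -1) v :=
    (Real.hasDerivAt_log h1).comp v hlin
  have hsq : HasDerivAt (fun u : ℝ => (1 - u) ^ 2) (2 * (1 - v) ^ 1 * -1) v :=
    hlin.pow 2
  have hmul : HasDerivAt (fun u : ℝ => θ * x * u) (θ * x) v := by
    simpa using (hasDerivAt_id v).const_mul (θ * x)
  have := ((hmul.const_mul (-(1 / 2))).sub (hsq.const_mul (θ ^ 2 / 4))).sub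
    (hlog.const_mul (1 / 2))
  refine (this : HasDerivAt (gfun θ x) _ v).congr_deriv ?_
  field_simp
  ring

/-- For `0 < θ < 1` and `2 ≤ x ≤ θ + 1/θ`, the function `g` attains its minimum over
`[0,1)` at `u = 0`. -/
theorem gfun_min_at_zero (θ x : ℝ) (hθ0 : 0 < θ) (hθ1 : θ < 1) (hx2 : 2 ≤ x)
    (hx : x ≤ θ + 1 / θ) :
    ∀ u ∈ Set.Ico (0 : ℝ) 1, gfun θ x 0 ≤ gfun θ x u := by
  have hθx : θ * x ≤ θ ^ 2 + 1 := by
    have := mul_le_mul_of_nonneg_left hx hθ0.le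
    have hθ : θ ≠ 0 := hθ0.ne'
    calc θ * x ≤ θ * (θ + 1 / θ) := this
      _ = θ ^ 2 + 1 := by field_simp
  have key : MonotoneOn (gfun θ x) (Set.Ico 0 1) := by
    apply monotoneOn_of_deriv_nonneg (convex_Ico (0 : ℝ) 1)
    · intro v hv
      exact ((gfun_hasDerivAt θ x v hv.2).continuousAt).continuousWithinAt
    · intro v hv
      rw [interior_Ico] at hv
      exact (gfun_hasDerivAt θ x v hv.2).differentiableAt.differentiableWithinAt
    · intro v hv
      rw [interior_Ico] at hv
      rw [(gfun_hasDerivAt θ x v hv.2).deriv]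
      have ht0 : (0 : ℝ) < 1 - v := by linarith [hv.2]
      have ht1 : 1 - v ≤ 1 := by linarith [hv.1]
      rw [← sub_nonneg]
      have h2 : 0 ≤ (1 - (1 - v)) * (1 - θ ^ 2 * (1 - v)) := by
        have : θ ^ 2 * (1 - v) ≤ 1 := by nlinarith
        nlinarith
      have hineq : θ * x ≤ θ ^ 2 * (1 - v) + 1 / (1 - v) := by
        calc θ * x ≤ θ ^ 2 + 1 := hθx
          _ ≤ θ ^ 2 * (1 - v) + 1 / (1 - v) := by
            rw [← sub_nonneg]
            have : (θ ^ 2 * (1 - v) + 1 / (1 - v) - (θ ^ 2 + 1)) * (1 - v)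
                = (1 - (1 - v)) * (1 - θ ^ 2 * (1 - v)) := by
              field_simp
              ring
            nlinarith
      have : -(θ * x) / 2 + θ ^ 2 * (1 - v) / 2 + 1 / (2 * (1 - v)) - 0
          = (θ ^ 2 * (1 - v) + 1 / (1 - v) - θ * x) / 2 := by
        field_simp
        ring
      rw [this]
      linarith
  intro u hu
  exact key ⟨le_refl 0, one_pos⟩ hu hu.1

end
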